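/- Let −1/2 < σ < 0 and m ∈ ℕ. Then there exists C > 0 such that ‖φ‖_{S_{w,σ}^m} ≤ C·‖φ‖_{S^{m+1}} for every Schwartz function φ : ℝ → ℝ that is either even or odd. -/

import Mathlib

open MeasureTheory Real

noncomputable section

/-- The even part of a function. -/
def evenPart (φ : ℝ → ℝ) : ℝ → ℝ := fun x => (φ x + φ (-x)) / 2

/-- The odd part of a function. -/
def oddPart (φ : ℝ → ℝ) : ℝ → ℝ := fun x => (φ x - φ (-x)) / 2

/-- For an odd smooth function ψ, `invX ψ` is the smooth function η with ψ(x) = x·η(x). -/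
def invX (ψ : ℝ → ℝ) : ℝ → ℝ := fun x => if x = 0 then deriv ψ 0 else ψ x / x

/-- The Dunkl operator `T_σ φ = φ' + 2σ·x⁻¹(φ_odd)`. -/
def dunklT (σ : ℝ) (φ : ℝ → ℝ) : ℝ → ℝ := fun x => deriv φ x + 2 * σ * invX (oddPart φ) x

/-- The Dunkl harmonic oscillator `L_σ φ = -T_σ(T_σ φ) + s²x²φ`. -/
def dunklL (σ s : ℝ) (φ : ℝ → ℝ) : ℝ → ℝ :=
  fun x => -dunklT σ (dunklT σ φ) x + s ^ 2 * x ^ 2 * φ x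

/-- Index pairs (i, j) with i + j ≤ m. -/
def idx (m : ℕ) : Finset (ℕ × ℕ) :=
  (Finset.range (m + 1) ×ˢ Finset.range (m + 1)).filter fun p => p.1 + p.2 ≤ m

def idxE (m : ℕ) : Finset (ℕ × ℕ) := (idx m).filter fun p => Even (p.1 + p.2)

def idxO (m : ℕ) : Finset (ℕ × ℕ) := (idx m).filter fun p => ¬ Even (p.1 + p.2)

/-- The Schwartz norm ‖φ‖_{S^m}. -/
def SNorm (m : ℕ) (φ : ℝ → ℝ) : ℝ :=
  ∑ p ∈ idx m, ⨆ x : ℝ, |x ^ p.1 * iteratedDeriv p.2 φ x|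

/-- Generic norm for σ ≥ 0: Σ_{i+j≤m} sup_x |x|^σ |x^i g_j(x)|. -/
def gNormNonneg (σ : ℝ) (m : ℕ) (g : ℕ → ℝ → ℝ) : ℝ :=
  ∑ p ∈ idx m, ⨆ x : ℝ, |x| ^ σ * |x ^ p.1 * g p.2 x|

/-- Generic norm for σ < 0 on even functions. -/
def gNormNegE (σ : ℝ) (m : ℕ) (g : ℕ → ℝ → ℝ) : ℝ :=
  (∑ p ∈ idxE m, ((⨆ x : {x : ℝ // 0 < |x| ∧ |x| ≤ 1}, |(x : ℝ) ^ p.1 * g p.2 x|) +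
      ⨆ x : {x : ℝ // 1 ≤ |x|}, |(x : ℝ)| ^ σ * |(x : ℝ) ^ p.1 * g p.2 x|)) +
  ∑ p ∈ idxO m, ⨆ x : {x : ℝ // x ≠ 0}, |(x : ℝ)| ^ σ * |(x : ℝ) ^ p.1 * g p.2 x|

/-- Generic norm for σ < 0 on odd functions. -/
def gNormNegO (σ : ℝ) (m : ℕ) (g : ℕ → ℝ → ℝ) : ℝ :=
  (∑ p ∈ idxO m, ((⨆ x : {x : ℝ // 0 < |x| ∧ |x| ≤ 1}, |(x : ℝ) ^ p.1 * g p.2 x|) +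
      ⨆ x : {x : ℝ // 1 ≤ |x|}, |(x : ℝ)| ^ σ * |(x : ℝ) ^ p.1 * g p.2 x|)) +
  ∑ p ∈ idxE m, ⨆ x : {x : ℝ // x ≠ 0}, |(x : ℝ)| ^ σ * |(x : ℝ) ^ p.1 * g p.2 x|

/-- The family of iterated derivatives of φ. -/
def derivFam (φ : ℝ → ℝ) : ℕ → ℝ → ℝ := fun j => iteratedDeriv j φ

/-- The family of iterates of the Dunkl operator applied to φ. -/
def dunklFam (σ : ℝ) (φ : ℝ → ℝ) : ℕ → ℝ → ℝ := fun j => (dunklT σ)^[j] φ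

/-- Weakly perturbed Schwartz norm ‖φ‖_{S_{w,σ}^m} for even φ. -/
def SwNormEven (σ : ℝ) (m : ℕ) (φ : ℝ → ℝ) : ℝ :=
  if 0 ≤ σ then gNormNonneg σ m (derivFam φ) else gNormNegE σ m (derivFam φ)

/-- Weakly perturbed Schwartz norm ‖φ‖_{S_{w,σ}^m} for odd φ. -/
def SwNormOdd (σ : ℝ) (m : ℕ) (φ : ℝ → ℝ) : ℝ :=
  if 0 ≤ σ then gNormNonneg σ m (derivFam φ) else gNormNegO σ m (derivFam φ)

/-- Perturbed Schwartz norm ‖φ‖_{S_σ^m} for even φ. -/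
def SpNormEven (σ : ℝ) (m : ℕ) (φ : ℝ → ℝ) : ℝ :=
  if 0 ≤ σ then gNormNonneg σ m (dunklFam σ φ) else gNormNegE σ m (dunklFam σ φ)

/-- Perturbed Schwartz norm ‖φ‖_{S_σ^m} for odd φ. -/
def SpNormOdd (σ : ℝ) (m : ℕ) (φ : ℝ → ℝ) : ℝ :=
  if 0 ≤ σ then gNormNonneg σ m (dunklFam σ φ) else gNormNegO σ m (dunklFam σ φ)

/-- Perturbed Schwartz norm for a general φ: the sum of the norms of its even and odd parts. -/
def SpNorm (σ : ℝ) (m : ℕ) (φ : ℝ → ℝ) : ℝ :=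
  SpNormEven σ m (evenPart φ) + SpNormOdd σ m (oddPart φ)

/-- The perturbed Sobolev norm ‖φ‖_{W_σ^m} = ⟨(1+L_σ)^m φ, φ⟩_σ^{1/2}. -/
def WNorm (σ s : ℝ) (m : ℕ) (φ : ℝ → ℝ) : ℝ :=
  Real.sqrt (∫ x : ℝ, ((fun ψ => ψ + dunklL σ s ψ)^[m] φ) x * φ x * |x| ^ (2 * σ))

/-- The Dunkl creation operator `B' φ = sxφ - T_σ φ`. -/
def Bop' (σ s : ℝ) (φ : ℝ → ℝ) : ℝ → ℝ := fun x => s * x * φ x - dunklT σ φ x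

/-- The generalized Hermite functions φ_k. -/
def hermiteFn (σ s : ℝ) : ℕ → ℝ → ℝ
  | 0 => fun x => s ^ ((2 * σ + 1) / 4) * (Real.Gamma (σ + 1 / 2)) ^ (-(1 / 2) : ℝ) *
      Real.exp (-s * x ^ 2 / 2)
  | (k + 1) =>
      if Even (k + 1) then
        fun x => (2 * ((k : ℝ) + 1) * s) ^ (-(1 / 2) : ℝ) * Bop' σ s (hermiteFn σ s k) x
      else
        fun x => (2 * ((k : ℝ) + 1 + 2 * σ) * s) ^ (-(1 / 2) : ℝ) * Bop' σ s (hermiteFn σ s k) x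

/-- The perturbed factorial m!_σ. -/
def pfact (σ : ℝ) : ℕ → ℝ
  | 0 => 1
  | (m + 1) =>
      if Even (m + 1) then pfact σ m * ((m : ℝ) + 1)
      else pfact σ m * ((m : ℝ) + 1 + 2 * σ)

/-- The generalized Hermite polynomials p_k = φ_k · e^{sx²/2}. -/
def genHermitePoly (σ s : ℝ) (k : ℕ) : ℝ → ℝ :=
  fun x => hermiteFn σ s k x * Real.exp (s * x ^ 2 / 2)

end

lemma my_diff (φ : SchwartzMap ℝ ℝ) (j : ℕ) : Differentiable ℝ (iteratedDeriv j ⇑φ) :=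
  (φ.smooth ⊤).differentiable_iteratedDeriv j (by exact_mod_cast WithTop.coe_lt_top _)

lemma my_parity (φ : SchwartzMap ℝ ℝ) (ε : ℝ) (hφ : ∀ x, φ (-x) = ε * φ x) (j : ℕ) (x : ℝ) :
    iteratedDeriv j (⇑φ) (-x) = ε * (-1 : ℝ) ^ j * iteratedDeriv j (⇑φ) x := by
  induction j generalizing x with
  | zero => simpa using hφ x
  | succ j ih =>
    have h1 : (fun y => iteratedDeriv j (⇑φ) (-y)) = fun y => ε * (-1:ℝ)^j * iteratedDeriv j (⇑φ) y :=
      funext ih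
    have h2 := deriv_comp_neg (f := iteratedDeriv j (⇑φ)) (x := x)
    rw [h1, deriv_const_mul _ ((my_diff φ j) x)] at h2
    rw [iteratedDeriv_succ]
    have : deriv (iteratedDeriv j ⇑φ) (-x) = -(ε * (-1:ℝ)^j * deriv (iteratedDeriv j ⇑φ) x) := by
      rw [h2]; ring
    rw [this]; ring

lemma my_mem_idx {m i j : ℕ} (h : i + j ≤ m) : (i, j) ∈ idx m := by
  simp only [idx, Finset.mem_filter, Finset.mem_product, Finset.mem_range]
  omega

lemma my_bdd (φ : SchwartzMap ℝ ℝ) (i j : ℕ) :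
    BddAbove (Set.range fun x : ℝ => |x ^ i * iteratedDeriv j (⇑φ) x|) := by
  obtain ⟨C, -, hC⟩ := φ.decay i j
  refine ⟨C, ?_⟩
  rintro y ⟨x, rfl⟩
  have := hC x
  rw [norm_iteratedFDeriv_eq_norm_iteratedDeriv] at this
  calc |x ^ i * iteratedDeriv j (⇑φ) x| = ‖x‖ ^ i * ‖iteratedDeriv j (⇑φ) x‖ := by
        rw [abs_mul, abs_pow]; rfl
    _ ≤ C := this

lemma my_hpt (m : ℕ) (φ : SchwartzMap ℝ ℝ) {i j : ℕ} (h : i + j ≤ m) (x : ℝ) :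
    |x ^ i * iteratedDeriv j (⇑φ) x| ≤ SNorm m ⇑φ := by
  have h1 : |x ^ i * iteratedDeriv j (⇑φ) x| ≤ ⨆ y : ℝ, |y ^ i * iteratedDeriv j (⇑φ) y| :=
    le_ciSup (my_bdd φ i j) x
  refine h1.trans ?_
  exact Finset.single_le_sum (f := fun p : ℕ × ℕ => ⨆ y : ℝ, |y ^ p.1 * iteratedDeriv p.2 (⇑φ) y|)
    (fun _ _ => Real.iSup_nonneg fun _ => abs_nonneg _) (my_mem_idx h)

lemma my_snorm_nonneg (m : ℕ) (φ : SchwartzMap ℝ ℝ) : 0 ≤ SNorm m ⇑φ :=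
  Finset.sum_nonneg fun _ _ => Real.iSup_nonneg fun _ => abs_nonneg _

/-- MVT bound for the mismatched-parity terms. -/
lemma my_lip (m : ℕ) (φ : SchwartzMap ℝ ℝ) {i j : ℕ} (h : i + j ≤ m)
    (h0 : (0:ℝ) ^ i * iteratedDeriv j (⇑φ) 0 = 0) (x : ℝ) :
    |x ^ i * iteratedDeriv j (⇑φ) x| ≤ ((m:ℝ) + 1) * SNorm (m+1) ⇑φ * |x| := by
  set g : ℝ → ℝ := fun y => y ^ i * iteratedDeriv j (⇑φ) y with hg
  set K := SNorm (m+1) ⇑φ with hK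
  have hdg : ∀ y : ℝ, HasDerivAt g ((i:ℝ) * y ^ (i-1) * iteratedDeriv j (⇑φ) y
      + y ^ i * iteratedDeriv (j+1) (⇑φ) y) y := by
    intro y
    have h1 := (hasDerivAt_pow i y).mul ((my_diff φ j y).hasDerivAt)
    rw [iteratedDeriv_succ]
    exact h1
  have hdiff : ∀ y : ℝ, DifferentiableAt ℝ g y := fun y => (hdg y).differentiableAt
  have hbound : ∀ y : ℝ, ‖deriv g y‖ ≤ ((m:ℝ) + 1) * K := by
    intro y
    rw [(hdg y).deriv]
    have b1 : |y ^ (i-1) * iteratedDeriv j (⇑φ) y| ≤ K := my_hpt (m+1) φ (by omega) y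
    have b2 : |y ^ i * iteratedDeriv (j+1) (⇑φ) y| ≤ K := my_hpt (m+1) φ (by omega) y
    have hi : (i:ℝ) ≤ (m:ℝ) := by exact_mod_cast (by omega : i ≤ m)
    have hKnn : 0 ≤ K := my_snorm_nonneg (m+1) φ
    calc ‖(i:ℝ) * y ^ (i-1) * iteratedDeriv j (⇑φ) y + y ^ i * iteratedDeriv (j+1) (⇑φ) y‖
        ≤ |(i:ℝ) * y ^ (i-1) * iteratedDeriv j (⇑φ) y| + |y ^ i * iteratedDeriv (j+1) (⇑φ) y| :=
          abs_add_le _ _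
      _ = (i:ℝ) * |y ^ (i-1) * iteratedDeriv j (⇑φ) y| + |y ^ i * iteratedDeriv (j+1) (⇑φ) y| := by
          rw [mul_assoc, abs_mul, Nat.abs_cast]
      _ ≤ (m:ℝ) * K + K := by
          have t1 : (i:ℝ) * |y ^ (i-1) * iteratedDeriv j (⇑φ) y| ≤ (m:ℝ) * K :=
            mul_le_mul hi b1 (abs_nonneg _) (Nat.cast_nonneg m)
          linarith
      _ = ((m:ℝ) + 1) * K := by ring
  have hmvt := Convex.norm_image_sub_le_of_norm_deriv_le (s := Set.univ) (f := g)
    (fun y _ => hdiff y) (fun y _ => hbound y) convex_univ (Set.mem_univ 0) (Set.mem_univ x)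
  have hg0 : g 0 = 0 := h0
  rw [hg0, sub_zero, sub_zero, Real.norm_eq_abs, Real.norm_eq_abs] at hmvt
  exact hmvt

theorem schwartz_le_weakly_perturbed_neg (σ : ℝ) (hσ : -(1/2) < σ) (hσ' : σ < 0) (m : ℕ) :
    ∃ C > 0, ∀ φ : SchwartzMap ℝ ℝ,
      ((∀ x, φ (-x) = φ x) → gNormNegE σ m (derivFam ⇑φ) ≤ C * SNorm (m + 1) ⇑φ) ∧
      ((∀ x, φ (-x) = -φ x) → gNormNegO σ m (derivFam ⇑φ) ≤ C * SNorm (m + 1) ⇑φ) := by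
  classical
  set C : ℝ := (((idx m).card : ℝ) + 1) * (2 * ((m:ℝ) + 2)) with hC
  have hCpos : 0 < C := by positivity
  refine ⟨C, hCpos, fun φ => ?_⟩
  set K := SNorm (m+1) ⇑φ with hKdef
  have hKnn : 0 ≤ K := my_snorm_nonneg (m+1) φ
  set B : ℝ := ((m:ℝ) + 2) * K with hB
  have hBnn : 0 ≤ B := by positivity
  haveI n1 : Nonempty {x : ℝ // 0 < |x| ∧ |x| ≤ 1} := ⟨⟨1, by norm_num⟩⟩
  haveI n2 : Nonempty {x : ℝ // 1 ≤ |x|} := ⟨⟨1, by norm_num⟩⟩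
  haveI n3 : Nonempty {x : ℝ // x ≠ 0} := ⟨⟨1, one_ne_zero⟩⟩
  have hσ1 : 0 ≤ σ + 1 := by linarith
  -- bound for the small-|x| sup (any parity)
  have hA : ∀ p ∈ idx m, (⨆ x : {x : ℝ // 0 < |x| ∧ |x| ≤ 1},
      |(x : ℝ) ^ p.1 * derivFam (⇑φ) p.2 x|) ≤ B := by
    intro p hp
    simp only [idx, Finset.mem_filter] at hp
    refine ciSup_le fun x => ?_
    have := my_hpt (m+1) φ (i := p.1) (j := p.2) (by omega) (x : ℝ)
    simp only [derivFam]
    nlinarith [my_snorm_nonneg (m+1) φ]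
  -- bound for the large-|x| sup (any parity)
  have hBig : ∀ p ∈ idx m, (⨆ x : {x : ℝ // 1 ≤ |x|},
      |(x : ℝ)| ^ σ * |(x : ℝ) ^ p.1 * derivFam (⇑φ) p.2 x|) ≤ B := by
    intro p hp
    simp only [idx, Finset.mem_filter] at hp
    refine ciSup_le fun x => ?_
    have h1 : |(x : ℝ)| ^ σ ≤ 1 := Real.rpow_le_one_of_one_le_of_nonpos x.2 hσ'.le
    have h2 := my_hpt (m+1) φ (i := p.1) (j := p.2) (by omega) (x : ℝ)
    have h3 : (0:ℝ) ≤ |(x : ℝ)| ^ σ := Real.rpow_nonneg (abs_nonneg _) σ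
    simp only [derivFam]
    nlinarith [abs_nonneg ((x : ℝ) ^ p.1 * iteratedDeriv p.2 (⇑φ) (x : ℝ))]
  -- bound for the mismatched-parity sup over x ≠ 0
  have hD : ∀ p ∈ idx m, (0:ℝ) ^ p.1 * iteratedDeriv p.2 (⇑φ) 0 = 0 →
      (⨆ x : {x : ℝ // x ≠ 0}, |(x : ℝ)| ^ σ * |(x : ℝ) ^ p.1 * derivFam (⇑φ) p.2 x|) ≤ B := by
    intro p hp h0
    simp only [idx, Finset.mem_filter] at hp
    refine ciSup_le fun x => ?_
    simp only [derivFam]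
    have hxpos : 0 < |(x : ℝ)| := abs_pos.mpr x.2
    rcases le_or_gt |(x : ℝ)| 1 with hx1 | hx1
    · have h1 := my_lip m φ (i := p.1) (j := p.2) (by omega) h0 (x : ℝ)
      have h2 : |(x : ℝ)| ^ σ * |(x : ℝ)| = |(x : ℝ)| ^ (σ + 1) := by
        rw [Real.rpow_add hxpos, Real.rpow_one]
      have h3 : |(x : ℝ)| ^ (σ + 1) ≤ 1 := Real.rpow_le_one (abs_nonneg _) hx1 hσ1
      have h4 : (0:ℝ) ≤ |(x : ℝ)| ^ σ := Real.rpow_nonneg (abs_nonneg _) σ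
      calc |(x : ℝ)| ^ σ * |(x : ℝ) ^ p.1 * iteratedDeriv p.2 (⇑φ) (x : ℝ)|
          ≤ |(x : ℝ)| ^ σ * (((m:ℝ) + 1) * K * |(x : ℝ)|) := by gcongr
        _ = ((m:ℝ) + 1) * K * (|(x : ℝ)| ^ σ * |(x : ℝ)|) := by ring
        _ ≤ ((m:ℝ) + 1) * K * 1 := by
            rw [h2]; exact mul_le_mul_of_nonneg_left h3 (by positivity)
        _ ≤ B := by rw [hB]; nlinarith
    · have h1 : |(x : ℝ)| ^ σ ≤ 1 := Real.rpow_le_one_of_one_le_of_nonpos hx1.le hσ'.le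
      have h2 := my_hpt (m+1) φ (i := p.1) (j := p.2) (by omega) (x : ℝ)
      have h3 : (0:ℝ) ≤ |(x : ℝ)| ^ σ := Real.rpow_nonneg (abs_nonneg _) σ
      nlinarith [abs_nonneg ((x : ℝ) ^ p.1 * iteratedDeriv p.2 (⇑φ) (x : ℝ))]
  have hcard : ((idxE m).card : ℝ) + ((idxO m).card : ℝ) ≤ ((idx m).card : ℝ) := by
    have := Finset.card_filter_add_card_filter_not
      (s := idx m) (p := fun p : ℕ × ℕ => Even (p.1 + p.2))
    rw [idxE, idxO]
    exact_mod_cast this.le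
  constructor
  · intro heven
    -- even case: mismatched indices are those with odd i+j
    have hzero : ∀ p ∈ idxO m, (0:ℝ) ^ p.1 * iteratedDeriv p.2 (⇑φ) 0 = 0 := by
      intro p hp
      simp only [idxO, Finset.mem_filter] at hp
      rcases Nat.eq_zero_or_pos p.1 with h1 | h1
      · have hodd : ¬ Even p.2 := by rw [h1, zero_add] at hp; exact hp.2
        have := my_parity φ 1 (fun x => by rw [one_mul, heven x]) p.2 0
        rw [neg_zero, one_mul, Odd.neg_one_pow (Nat.not_even_iff_odd.mp hodd)] at this
        rw [h1, pow_zero, one_mul]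
        linarith
      · rw [zero_pow (by omega), zero_mul]
    rw [gNormNegE]
    have s1 : (∑ p ∈ idxE m, ((⨆ x : {x : ℝ // 0 < |x| ∧ |x| ≤ 1},
          |(x : ℝ) ^ p.1 * derivFam (⇑φ) p.2 x|) +
        ⨆ x : {x : ℝ // 1 ≤ |x|}, |(x : ℝ)| ^ σ * |(x : ℝ) ^ p.1 * derivFam (⇑φ) p.2 x|))
        ≤ ((idxE m).card : ℝ) * (2 * B) := by
      rw [← nsmul_eq_mul]
      refine Finset.sum_le_card_nsmul _ _ _ fun p hp => ?_
      have hp' : p ∈ idx m := Finset.mem_of_mem_filter p hp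
      have := hA p hp'
      have := hBig p hp'
      linarith
    have s2 : (∑ p ∈ idxO m, ⨆ x : {x : ℝ // x ≠ 0},
          |(x : ℝ)| ^ σ * |(x : ℝ) ^ p.1 * derivFam (⇑φ) p.2 x|)
        ≤ ((idxO m).card : ℝ) * (2 * B) := by
      rw [← nsmul_eq_mul]
      refine Finset.sum_le_card_nsmul _ _ _ fun p hp => ?_
      have := hD p (Finset.mem_of_mem_filter p hp) (hzero p hp)
      linarith
    have : C * SNorm (m+1) ⇑φ = (((idx m).card : ℝ) + 1) * (2 * B) := by
      rw [hC, hB, ← hKdef]; ring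
    rw [this]
    have hc2 : ((idxE m).card : ℝ) * (2 * B) + ((idxO m).card : ℝ) * (2 * B)
        ≤ (((idx m).card : ℝ) + 1) * (2 * B) := by nlinarith
    linarith
  · intro hodd
    have hzero : ∀ p ∈ idxE m, (0:ℝ) ^ p.1 * iteratedDeriv p.2 (⇑φ) 0 = 0 := by
      intro p hp
      simp only [idxE, Finset.mem_filter] at hp
      rcases Nat.eq_zero_or_pos p.1 with h1 | h1
      · have heven2 : Even p.2 := by rw [h1, zero_add] at hp; exact hp.2
        have := my_parity φ (-1) (fun x => by rw [neg_one_mul, hodd x]) p.2 0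
        rw [neg_zero, Even.neg_one_pow heven2] at this
        rw [h1, pow_zero, one_mul]
        linarith
      · rw [zero_pow (by omega), zero_mul]
    rw [gNormNegO]
    have s1 : (∑ p ∈ idxO m, ((⨆ x : {x : ℝ // 0 < |x| ∧ |x| ≤ 1},
          |(x : ℝ) ^ p.1 * derivFam (⇑φ) p.2 x|) +
        ⨆ x : {x : ℝ // 1 ≤ |x|}, |(x : ℝ)| ^ σ * |(x : ℝ) ^ p.1 * derivFam (⇑φ) p.2 x|))
        ≤ ((idxO m).card : ℝ) * (2 * B) := by
      rw [← nsmul_eq_mul]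
      refine Finset.sum_le_card_nsmul _ _ _ fun p hp => ?_
      have hp' : p ∈ idx m := Finset.mem_of_mem_filter p hp
      have := hA p hp'
      have := hBig p hp'
      linarith
    have s2 : (∑ p ∈ idxE m, ⨆ x : {x : ℝ // x ≠ 0},
          |(x : ℝ)| ^ σ * |(x : ℝ) ^ p.1 * derivFam (⇑φ) p.2 x|)
        ≤ ((idxE m).card : ℝ) * (2 * B) := by
      rw [← nsmul_eq_mul]
      refine Finset.sum_le_card_nsmul _ _ _ fun p hp => ?_
      have := hD p (Finset.mem_of_mem_filter p hp) (hzero p hp)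
      linarith
    have : C * SNorm (m+1) ⇑φ = (((idx m).card : ℝ) + 1) * (2 * B) := by
      rw [hC, hB, ← hKdef]; ring
    rw [this]
    have hc2 : ((idxO m).card : ℝ) * (2 * B) + ((idxE m).card : ℝ) * (2 * B)
        ≤ (((idx m).card : ℝ) + 1) * (2 * B) := by nlinarith
    linarith
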